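/- Let p, q, r > 1 satisfy 1/p + 1/q = 1 + 1/r, and let α, β > 0. Then ( ∫_ℝ ( (M_α)^{1/p} * (M_β)^{1/q} )(x)^r dx )^{1/r} = [ (pα/α^{1/p}) · (qβ/β^{1/q}) · (pα + qβ)^{1/r} / ( r^{1/r} (pα + qβ) ) ]^{1/2}. -/

import Mathlib

open MeasureTheory Real

/-- Convolution on `ℝ`. -/
noncomputable def conv (f g : ℝ → ℝ) : ℝ → ℝ := fun x => ∫ y, f (x - y) * g y

/-- The centered Gaussian density on `ℝ` with variance `s`. -/
noncomputable def gauss (s : ℝ) : ℝ → ℝ :=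
  fun x => (2 * Real.pi * s) ^ (-(1:ℝ)/2) * Real.exp (-x ^ 2 / (2 * s))

lemma conv_exp (a b : ℝ) (ha : 0 < a) (hb : 0 < b) (x : ℝ) :
    (∫ y : ℝ, Real.exp (-a * (x - y) ^ 2) * Real.exp (-b * y ^ 2)) =
      Real.sqrt (Real.pi / (a + b)) * Real.exp (-(a * b / (a + b)) * x ^ 2) := by
  have hab : 0 < a + b := by linarith
  have key : ∀ y : ℝ, Real.exp (-a * (x - y) ^ 2) * Real.exp (-b * y ^ 2) =
      Real.exp (-(a + b) * (y - a * x / (a + b)) ^ 2) * Real.exp (-(a * b / (a + b)) * x ^ 2) := by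
    intro y
    rw [← Real.exp_add, ← Real.exp_add]
    congr 1
    field_simp
    ring
  simp_rw [key]
  rw [MeasureTheory.integral_mul_const,
    MeasureTheory.integral_sub_right_eq_self (fun y => Real.exp (-(a + b) * y ^ 2))
      (a * x / (a + b)),
    integral_gaussian]

lemma gauss_rpow (s c : ℝ) (hs : 0 < s) (y : ℝ) :
    gauss s y ^ c = (2 * Real.pi * s) ^ (-(c / 2)) * Real.exp (-(c / (2 * s)) * y ^ 2) := by
  have h2 : (0:ℝ) < 2 * Real.pi * s := by positivity
  unfold gauss
  rw [Real.mul_rpow (Real.rpow_nonneg h2.le _) (Real.exp_nonneg _), ← Real.rpow_mul h2.le,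
    ← Real.exp_mul]
  congr 1
  · congr 1; ring
  · field_simp

theorem gaussian_conv_lr_norm (p q r : ℝ) (hp : 1 < p) (hq : 1 < q) (hr : 1 < r)
    (hpqr : 1/p + 1/q = 1 + 1/r) (α β : ℝ) (hα : 0 < α) (hβ : 0 < β) :
    (∫ x, conv (fun y => gauss α y ^ (1/p)) (fun y => gauss β y ^ (1/q)) x ^ r) ^ (1/r) =
      ((p * α / α ^ (1/p)) * (q * β / β ^ (1/q)) * (p * α + q * β) ^ (1/r) /
        (r ^ (1/r) * (p * α + q * β))) ^ ((1:ℝ)/2) := by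
  have hp0 : (0:ℝ) < p := by linarith
  have hq0 : (0:ℝ) < q := by linarith
  have hr0 : (0:ℝ) < r := by linarith
  set σ : ℝ := p * α + q * β with hσdef
  have hσ : 0 < σ := by positivity
  set a : ℝ := 1 / (2 * p * α) with hadef
  set b : ℝ := 1 / (2 * q * β) with hbdef
  have ha : 0 < a := by positivity
  have hb : 0 < b := by positivity
  have hab : a + b = σ / (2 * p * α * (q * β)) := by
    rw [hadef, hbdef, hσdef]; field_simp; ring
  have habk : a * b / (a + b) = 1 / (2 * σ) := by
    rw [hadef, hbdef, hσdef]; field_simp; ring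
  set CA : ℝ := (2 * Real.pi * α) ^ (-(1 / p / 2)) with hCA
  set CB : ℝ := (2 * Real.pi * β) ^ (-(1 / q / 2)) with hCB
  have hCA0 : 0 < CA := by rw [hCA]; positivity
  have hCB0 : 0 < CB := by rw [hCB]; positivity
  -- compute the convolution
  have hconv : ∀ x : ℝ, conv (fun y => gauss α y ^ (1/p)) (fun y => gauss β y ^ (1/q)) x =
      CA * CB * Real.sqrt (Real.pi / (a + b)) * Real.exp (-(1 / (2 * σ)) * x ^ 2) := by
    intro x
    unfold conv
    have e1 : ∀ y : ℝ, gauss α (x - y) ^ (1/p) * gauss β y ^ (1/q) =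
        (CA * CB) * (Real.exp (-a * (x - y) ^ 2) * Real.exp (-b * y ^ 2)) := by
      intro y
      rw [gauss_rpow α (1/p) hα, gauss_rpow β (1/q) hβ, hCA, hCB]
      have : 1 / p / (2 * α) = a := by rw [hadef]; field_simp
      have : 1 / q / (2 * β) = b := by rw [hbdef]; field_simp
      rw [hadef, hbdef]
      ring_nf
    simp_rw [e1]
    rw [MeasureTheory.integral_const_mul, conv_exp a b ha hb x, habk]
    ring
  simp_rw [hconv]
  -- compute the integral of the r-th power
  set S : ℝ := Real.sqrt (Real.pi / (a + b)) with hS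
  have hS0 : 0 < S := by
    rw [hS]; exact Real.sqrt_pos.2 (by positivity)
  have e2 : ∀ x : ℝ, (CA * CB * S * Real.exp (-(1 / (2 * σ)) * x ^ 2)) ^ r =
      (CA * CB * S) ^ r * Real.exp (-(r / (2 * σ)) * x ^ 2) := by
    intro x
    rw [Real.mul_rpow (by positivity) (Real.exp_nonneg _), ← Real.exp_mul]
    congr 2
    ring
  simp_rw [e2]
  rw [MeasureTheory.integral_const_mul, integral_gaussian]
  -- now a scalar identity
  have hL : 0 < (CA * CB * S) ^ r * Real.sqrt (Real.pi / (r / (2 * σ))) := by positivity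
  have hR : (0:ℝ) < (p * α / α ^ (1/p)) * (q * β / β ^ (1/q)) * σ ^ (1/r) /
      (r ^ (1/r) * σ) := by positivity
  rw [← Real.exp_log (Real.rpow_pos_of_pos hL _), ← Real.exp_log (Real.rpow_pos_of_pos hR _)]
  congr 1
  rw [Real.log_rpow hL, Real.log_rpow hR]
  rw [Real.log_mul (by positivity) (by positivity), Real.log_rpow (by positivity),
    Real.log_mul (by positivity) (by positivity), Real.log_mul hCA0.ne' hCB0.ne',
    hCA, hCB, Real.log_rpow (by positivity), Real.log_rpow (by positivity),
    hS, Real.log_sqrt (by positivity), Real.log_sqrt (by positivity),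
    Real.log_div (by positivity) (by positivity), Real.log_div (by positivity) (by positivity),
    hab, Real.log_div (by positivity) (by positivity), Real.log_div (by positivity) (by positivity)]
  have hA : Real.log (2 * Real.pi * α) = Real.log 2 + Real.log Real.pi + Real.log α := by
    rw [Real.log_mul (by positivity) hα.ne', Real.log_mul (by norm_num) Real.pi_ne_zero]
  have hB : Real.log (2 * Real.pi * β) = Real.log 2 + Real.log Real.pi + Real.log β := by
    rw [Real.log_mul (by positivity) hβ.ne', Real.log_mul (by norm_num) Real.pi_ne_zero]
  have hC : Real.log (2 * p * α * (q * β)) =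
      Real.log 2 + Real.log p + Real.log α + (Real.log q + Real.log β) := by
    rw [Real.log_mul (by positivity) (by positivity), Real.log_mul (by positivity) hα.ne',
      Real.log_mul (by positivity) hp0.ne', Real.log_mul hq0.ne' hβ.ne']
  have hD : Real.log (2 * σ) = Real.log 2 + Real.log σ := by
    rw [Real.log_mul (by norm_num) hσ.ne']
  have hE : Real.log (p * α / α ^ (1/p) * (q * β / β ^ (1/q)) * σ ^ (1/r)) =
      (Real.log p + Real.log α - (1/p) * Real.log α) +
      (Real.log q + Real.log β - (1/q) * Real.log β) + (1/r) * Real.log σ := by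
    rw [Real.log_mul (by positivity) (by positivity), Real.log_mul (by positivity) (by positivity),
      Real.log_div (by positivity) (by positivity), Real.log_div (by positivity) (by positivity),
      Real.log_mul hp0.ne' hα.ne', Real.log_mul hq0.ne' hβ.ne',
      Real.log_rpow hα, Real.log_rpow hβ, Real.log_rpow hσ]
  have hF : Real.log (r ^ (1/r) * σ) = (1/r) * Real.log r + Real.log σ := by
    rw [Real.log_mul (by positivity) hσ.ne', Real.log_rpow hr0]
  rw [hA, hB, hC, hD, Real.log_div (by positivity) (by positivity), hE, hF]
  have h' : q * r + p * r = p * q * r + p * q := by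
    field_simp at hpqr; linarith
  field_simp
  linear_combination (-(Real.log 2 + Real.log Real.pi)) * h'
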